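/- For every positive odd integer n, the set H = {k : 1 ≤ k < 4n, k not ≡ 0 (mod 4)} can be partitioned into n triples such that each triple sums to either 4n−2 or 8n−2, and each triple contains exactly one integer from each nonzero residue class modulo 4. -/

import Mathlib

namespace Stmt3Aux

def c (n i : ℕ) : ℕ := (3 * n - 2 - 2 * i) % n

def t (n i : ℕ) : Finset ℕ := {4 * i + 1, 4 * i + 2, 4 * c n i + 3}

lemma c_lt (n i : ℕ) (hn : 0 < n) : c n i < n := Nat.mod_lt _ hn

lemma c_key (n i : ℕ) (hn : 0 < n) (hi : i < n) :
    2 * i + c n i + 2 = n ∨ 2 * i + c n i + 2 = 2 * n := by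
  unfold c
  rcases lt_or_ge (3 * n - 2 - 2 * i) (2 * n) with h | h
  · rw [Nat.mod_eq_sub_mod (by omega), Nat.mod_eq_of_lt (by omega)]; omega
  · rw [Nat.mod_eq_sub_mod (by omega : n ≤ _), Nat.mod_eq_sub_mod (by omega),
      Nat.mod_eq_of_lt (by omega)]; omega

lemma c_injOn (n : ℕ) (ho : Odd n) {i j : ℕ} (hi : i < n) (hj : j < n)
    (h : c n i = c n j) : i = j := by
  have hn : 0 < n := ho.pos
  unfold c at h
  have h' : (3 * n - 2 - 2 * i) ≡ (3 * n - 2 - 2 * j) [MOD n] := h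
  have h2 := h'.add_right (2 * i + 2 * j)
  have e1 : 3 * n - 2 - 2 * i + (2 * i + 2 * j) = (3 * n - 2) + 2 * j := by omega
  have e2 : 3 * n - 2 - 2 * j + (2 * i + 2 * j) = (3 * n - 2) + 2 * i := by omega
  rw [e1, e2] at h2
  have h3 : 2 * j ≡ 2 * i [MOD n] := Nat.ModEq.add_left_cancel' (3 * n - 2) h2
  have hco : Nat.gcd n 2 = 1 := Nat.coprime_two_right.mpr ho
  have h4 : j ≡ i [MOD n] := Nat.ModEq.cancel_left_of_coprime hco h3
  have := h4.eq_of_lt_of_lt hj hi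
  omega

lemma c_surj (n : ℕ) (ho : Odd n) {j : ℕ} (hj : j < n) : ∃ i, i < n ∧ c n i = j := by
  have hn : 0 < n := ho.pos
  have himg : (Finset.range n).image (c n) = Finset.range n := by
    apply Finset.eq_of_subset_of_card_le
    · intro x hx
      simp only [Finset.mem_image, Finset.mem_range] at hx ⊢
      obtain ⟨i, _, rfl⟩ := hx
      exact c_lt n i hn
    · rw [Finset.card_image_of_injOn]
      intro a ha b hb hab
      exact c_injOn n ho (Finset.mem_range.mp ha) (Finset.mem_range.mp hb) hab
  have : j ∈ (Finset.range n).image (c n) := by rw [himg]; exact Finset.mem_range.mpr hj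
  simpa using this

lemma mem_t (n i x : ℕ) : x ∈ t n i ↔ x = 4 * i + 1 ∨ x = 4 * i + 2 ∨ x = 4 * c n i + 3 := by
  simp [t]

lemma card_t (n i : ℕ) : (t n i).card = 3 := by
  rw [t, Finset.card_insert_of_notMem (by simp; omega),
    Finset.card_insert_of_notMem (by simp; omega), Finset.card_singleton]

lemma sum_t (n i : ℕ) : (∑ x ∈ t n i, x) = 8 * i + 4 * c n i + 6 := by
  rw [t, Finset.sum_insert (by simp; omega), Finset.sum_insert (by simp; omega),
    Finset.sum_singleton]
  ring

end Stmt3Aux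

open Stmt3Aux in
theorem stmt_3 (n : ℕ) (hn : 0 < n) (ho : Odd n) :
    ∃ T : Finset (Finset ℕ), T.card = n ∧
      (T : Set (Finset ℕ)).PairwiseDisjoint id ∧
      T.sup id = (Finset.Ico 1 (4 * n)).filter (fun k => k % 4 ≠ 0) ∧
      ∀ t ∈ T, t.card = 3 ∧ ((∑ x ∈ t, x) = 4 * n - 2 ∨ (∑ x ∈ t, x) = 8 * n - 2) ∧
        ∀ r, 1 ≤ r → r < 4 → ∃! x, x ∈ t ∧ x % 4 = r := by
  refine ⟨(Finset.range n).image (t n), ?_, ?_, ?_, ?_⟩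
  · rw [Finset.card_image_of_injOn, Finset.card_range]
    intro a ha b hb hab
    have : 4 * a + 1 ∈ t n b := hab ▸ (by rw [mem_t]; omega)
    rw [mem_t] at this
    omega
  · intro x hx y hy hxy
    simp only [Finset.coe_image, Set.mem_image, Finset.mem_coe, Finset.mem_range] at hx hy
    obtain ⟨i, hi, rfl⟩ := hx
    obtain ⟨j, hj, rfl⟩ := hy
    have hij : i ≠ j := fun h => hxy (by rw [h])
    simp only [Function.onFun, id]
    rw [Finset.disjoint_left]
    intro a hai haj
    rw [mem_t] at hai haj
    rcases hai with h1 | h1 | h1 <;> rcases haj with h2 | h2 | h2 <;> try omega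
    exact hij (c_injOn n ho hi hj (by omega))
  · rw [Finset.sup_image]
    ext k
    simp only [Finset.mem_sup, Finset.mem_range, Finset.mem_filter, Finset.mem_Ico,
      Function.comp_apply, id_eq]
    constructor
    · rintro ⟨i, hi, hk⟩
      rw [mem_t] at hk
      have := c_lt n i hn
      omega
    · rintro ⟨⟨h1, h2⟩, h3⟩
      have hd : k = 4 * (k / 4) + k % 4 := by omega
      have h4 : k % 4 = 1 ∨ k % 4 = 2 ∨ k % 4 = 3 := by omega
      rcases h4 with hk | hk | hk
      · exact ⟨k / 4, by omega, by rw [mem_t]; omega⟩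
      · exact ⟨k / 4, by omega, by rw [mem_t]; omega⟩
      · obtain ⟨i, hi, hci⟩ := c_surj n ho (show k / 4 < n by omega)
        exact ⟨i, hi, by rw [mem_t]; omega⟩
  · intro s hs
    simp only [Finset.mem_image, Finset.mem_range] at hs
    obtain ⟨i, hi, rfl⟩ := hs
    refine ⟨card_t n i, ?_, ?_⟩
    · rw [sum_t]
      rcases c_key n i hn hi with h | h <;> omega
    · intro r hr1 hr4
      interval_cases r
      · refine ⟨4 * i + 1, ⟨by rw [mem_t]; omega, by omega⟩, ?_⟩
        rintro x ⟨hx, hxr⟩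
        rw [mem_t] at hx
        omega
      · refine ⟨4 * i + 2, ⟨by rw [mem_t]; omega, by omega⟩, ?_⟩
        rintro x ⟨hx, hxr⟩
        rw [mem_t] at hx
        omega
      · refine ⟨4 * c n i + 3, ⟨by rw [mem_t]; omega, by omega⟩, ?_⟩
        rintro x ⟨hx, hxr⟩
        rw [mem_t] at hx
        omega
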